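/- The characteristic polynomial of the distance matrix D of the complete k-partite graph K_{n_1,...,n_k} on n = n_1 + ... + n_k vertices equals (λ+2)^{n-k} [ ∏_{i=1}^k (λ - n_i + 2) - Σ_{i=1}^k n_i ∏_{j≠i} (λ - n_j + 2) ]. -/

import Mathlib

open Polynomial Finset Matrix

/-! ### Auxiliary determinant lemmas -/

lemma det_diag_sub_row {K : Type*} [Field K] {k : ℕ} (d v : Fin k → K)
    (hd : ∀ i, d i ≠ 0) :
    (Matrix.of fun i j : Fin k => (if i = j then d i else 0) - v j).det =
      ∏ i, d i - ∑ i, v i * ∏ j ∈ univ.erase i, d j := by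
  have hA : IsUnit (Matrix.diagonal d).det := by
    rw [Matrix.det_diagonal]
    exact (IsUnit.mk0 _ (Finset.prod_ne_zero_iff.2 fun i _ => hd i))
  have h1 : (Matrix.of fun i j : Fin k => (if i = j then d i else 0) - v j)
      = Matrix.diagonal d + Matrix.replicateCol Unit (fun _ => (-1 : K)) * Matrix.replicateRow Unit v := by
    ext i j
    simp [Matrix.mul_apply, Matrix.diagonal, Matrix.replicateCol, Matrix.replicateRow, sub_eq_add_neg]
  have hinv : (Matrix.diagonal d)⁻¹ = Matrix.diagonal (fun i => (d i)⁻¹) :=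
    Matrix.inv_eq_right_inv (by
      rw [Matrix.diagonal_mul_diagonal]
      ext i j
      rcases eq_or_ne i j with h | h
      · subst h; simp [mul_inv_cancel₀ (hd i)]
      · simp [Matrix.diagonal_apply_ne _ h, Matrix.one_apply_ne h])
  rw [h1, Matrix.det_add_replicateCol_mul_replicateRow hA, Matrix.det_diagonal, Matrix.det_unique, hinv]
  have hE : (1 + ((Matrix.replicateRow Unit v * Matrix.diagonal fun i => (d i)⁻¹ : Matrix Unit (Fin k) K) *
      (Matrix.replicateCol Unit fun _ => (-1:K) : Matrix (Fin k) Unit K)) : Matrix Unit Unit K) default default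
      = 1 - ∑ i, v i * (d i)⁻¹ := by
    simp [Matrix.add_apply, Matrix.mul_apply, Matrix.diagonal, Finset.mul_sum,
      sub_eq_add_neg, Finset.sum_neg_distrib]
  rw [hE, mul_sub, mul_one, Finset.mul_sum]
  congr 1
  refine Finset.sum_congr rfl fun i _ => ?_
  have : ∏ j, d j = d i * ∏ j ∈ univ.erase i, d j := (Finset.mul_prod_erase univ d (mem_univ i)).symm
  rw [this]
  field_simp [hd i]

lemma det_diag_sub_row_poly {k : ℕ} (c a : Fin k → ℝ) :
    (Matrix.of fun i j : Fin k => (if i = j then X - C (c i) else 0) - C (a j)).det =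
      ∏ i, (X - C (c i)) - ∑ i, C (a i) * ∏ j ∈ univ.erase i, (X - C (c j)) := by
  apply RatFunc.algebraMap_injective ℝ
  set f : ℝ[X] →+* RatFunc ℝ := (algebraMap ℝ[X] (RatFunc ℝ)) with hf
  have hfi : Function.Injective f := RatFunc.algebraMap_injective ℝ
  have hd : ∀ i : Fin k, f (X - C (c i)) ≠ 0 := by
    intro i h
    exact X_sub_C_ne_zero (c i) (hfi (by simpa using h))
  have hmap : f.mapMatrix (Matrix.of fun i j : Fin k =>
      (if i = j then X - C (c i) else 0) - C (a j)) =
      Matrix.of fun i j : Fin k => (if i = j then f (X - C (c i)) else 0) - f (C (a j)) := by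
    ext i j
    by_cases h : i = j <;> simp [h]
  rw [RingHom.map_det, hmap, det_diag_sub_row _ _ hd]
  simp [map_sub, map_prod, map_sum]

/-- The distance matrix of the complete multipartite graph `K_{n₁,…,n_k}`:
distance 0 on the diagonal, 2 between distinct vertices of the same part,
1 between vertices of different parts. -/
noncomputable def distMatrixCM {k : ℕ} (n : Fin k → ℕ) :
    Matrix (Σ i, Fin (n i)) (Σ i, Fin (n i)) ℝ :=
  Matrix.of fun u v => if u = v then 0 else if u.1 = v.1 then 2 else 1

/-! ### Setup for the complete multipartite distance matrix -/

noncomputable section CMAux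
namespace CMAux

variable {k : ℕ} (n : Fin k → ℕ) (hn : ∀ i, 0 < n i)

/-- representative (first vertex) of the part of `u` -/
def rep (u : Σ i, Fin (n i)) : Σ i, Fin (n i) := ⟨u.1, ⟨0, hn u.1⟩⟩

lemma sig_eq {i j : Fin k} {x : Fin (n i)} {y : Fin (n j)} :
    (⟨i, x⟩ : Σ i, Fin (n i)) = ⟨j, y⟩ ↔ i = j ∧ (x : ℕ) = (y : ℕ) := by
  constructor
  · rintro h
    cases h
    exact ⟨rfl, rfl⟩
  · rintro ⟨rfl, h⟩
    congr 1
    exact Fin.ext h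

/-- the char matrix of the distance matrix, explicitly -/
def MM : Matrix (Σ i, Fin (n i)) (Σ i, Fin (n i)) ℝ[X] :=
  Matrix.of fun u w => if u = w then X else if u.1 = w.1 then -C 2 else -C 1

lemma charmatrix_eq : charmatrix (distMatrixCM n) = MM n := by
  refine Matrix.ext fun u w => ?_
  rcases eq_or_ne u w with h | h
  · subst h
    simp [MM, distMatrixCM]
  · rw [charmatrix_apply_ne _ _ _ h]
    by_cases h1 : u.1 = w.1 <;> simp [MM, distMatrixCM, h, h1]

/-- the strictly "unipotent part" used for row/column operations -/
def NN : Matrix (Σ i, Fin (n i)) (Σ i, Fin (n i)) ℝ[X] :=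
  Matrix.of fun u v => if (u.2 : ℕ) = 0 then 0 else if v = rep n hn u then 1 else 0

lemma NN_mul_NN : NN n hn * NN n hn = 0 := by
  refine Matrix.ext fun u w => ?_
  rw [Matrix.mul_apply, Matrix.zero_apply]
  apply Finset.sum_eq_zero
  intro v _
  by_cases h : (u.2 : ℕ) = 0
  · simp [NN, h]
  · by_cases hv : v = rep n hn u
    · subst hv
      have h0 : ((rep n hn u).2 : ℕ) = 0 := rfl
      simp [NN, h0]
    · simp [NN, h, hv]

lemma one_sub_mul_one_add : (1 - NN n hn) * (1 + NN n hn) = 1 := by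
  rw [mul_add, mul_one, sub_mul, one_mul, NN_mul_NN, sub_zero]
  abel

lemma u_ne_rep {u : Σ i, Fin (n i)} (h : (u.2 : ℕ) ≠ 0) : u ≠ rep n hn u := by
  intro hc
  exact h (by rw [hc]; rfl)

lemma NM_apply (u w : Σ i, Fin (n i)) :
    (NN n hn * MM n) u w = if (u.2 : ℕ) = 0 then 0 else MM n (rep n hn u) w := by
  rw [Matrix.mul_apply]
  by_cases h : (u.2 : ℕ) = 0
  · simp [NN, h]
  · rw [if_neg h]
    rw [Finset.sum_eq_single (rep n hn u)]
    · simp [NN, h]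
    · intro v _ hv
      simp [NN, h, hv]
    · intro hc
      exact absurd (Finset.mem_univ _) hc

lemma M1_apply (u w : Σ i, Fin (n i)) :
    ((1 - NN n hn) * MM n) u w =
      if (u.2 : ℕ) = 0 then MM n u w
      else (if w = u then X + C 2 else if w = rep n hn u then -(X + C 2) else 0) := by
  rw [sub_mul, one_mul, Matrix.sub_apply, NM_apply]
  by_cases h : (u.2 : ℕ) = 0
  · simp [h]
  · rw [if_neg h, if_neg h]
    have hur : u ≠ rep n hn u := u_ne_rep n hn h
    have hr1 : (rep n hn u).1 = u.1 := rfl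
    by_cases hwu : w = u
    · subst hwu
      rw [if_pos rfl]
      have h2 : MM n (rep n hn w) w = -C 2 := by
        simp [MM, hr1, (Ne.symm hur)]
      have h3 : MM n w w = X := by simp [MM]
      rw [h2, h3]
      ring
    · rw [if_neg hwu]
      by_cases hwr : w = rep n hn u
      · subst hwr
        rw [if_pos rfl]
        have h1 : MM n u (rep n hn u) = -C 2 := by simp [MM, hur, hr1]
        have h2 : MM n (rep n hn u) (rep n hn u) = X := by simp [MM]
        rw [h1, h2]
        ring
      · rw [if_neg hwr]
        by_cases h1 : u.1 = w.1
        · have hne : u ≠ w := fun hc => hwu hc.symm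
          have e1 : MM n u w = -C 2 := by simp [MM, hne, h1]
          have e2 : MM n (rep n hn u) w = -C 2 := by
            have : rep n hn u ≠ w := fun hc => hwr hc.symm
            simp [MM, this, hr1.trans h1]
          rw [e1, e2, sub_self]
        · have hne : u ≠ w := fun hc => hwu hc.symm
          have e1 : MM n u w = -C 1 := by simp [MM, hne, h1]
          have e2 : MM n (rep n hn u) w = -C 1 := by
            have h2 : rep n hn u ≠ w := fun hc => hwr hc.symm
            have h3 : (rep n hn u).1 ≠ w.1 := by rw [hr1]; exact h1
            simp [MM, h2, h3]
          rw [e1, e2, sub_self]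

lemma NN_apply_right (v w : Σ i, Fin (n i)) :
    NN n hn v w = if (w.2 : ℕ) = 0 ∧ v.1 = w.1 ∧ (v.2 : ℕ) ≠ 0 then 1 else 0 := by
  obtain ⟨i, x⟩ := v
  obtain ⟨j, y⟩ := w
  show (if (x : ℕ) = 0 then 0 else if (⟨j,y⟩ : Σ i, Fin (n i)) = ⟨i, ⟨0, hn i⟩⟩ then 1 else 0) = _
  by_cases hx : (x : ℕ) = 0
  · simp [hx]
  · rw [if_neg hx]
    by_cases hy : (⟨j, y⟩ : Σ i, Fin (n i)) = ⟨i, ⟨0, hn i⟩⟩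
    · obtain ⟨hij, hy0⟩ := (sig_eq n).mp hy
      rw [if_pos hy, if_pos ⟨hy0, hij.symm, hx⟩]
    · rw [if_neg hy, if_neg]
      rintro ⟨h1, h2, -⟩
      exact hy ((sig_eq n).mpr ⟨h2.symm, h1⟩)

lemma M1N_apply (u w : Σ i, Fin (n i)) :
    (((1 - NN n hn) * MM n) * NN n hn) u w =
      if (w.2 : ℕ) = 0 then
        ∑ x : Fin (n w.1), (if (x : ℕ) ≠ 0 then ((1 - NN n hn) * MM n) u ⟨w.1, x⟩ else 0)
      else 0 := by
  rw [Matrix.mul_apply]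
  simp only [NN_apply_right]
  by_cases hw : (w.2 : ℕ) = 0
  · rw [if_pos hw]
    simp only [hw, true_and, mul_ite, mul_one, mul_zero]
    rw [← Finset.univ_sigma_univ, Finset.sum_sigma]
    rw [Finset.sum_eq_single w.1]
    · apply Finset.sum_congr rfl
      intro x _
      simp
    · intro i _ hi
      apply Finset.sum_eq_zero
      intro x _
      simp [hi]
    · intro hc
      exact absurd (Finset.mem_univ _) hc
  · simp [hw]

lemma card_filter_ne_zero (m : ℕ) :
    (univ.filter fun x : Fin m => (x : ℕ) ≠ 0).card = m - 1 := by
  rcases m with _ | m'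
  · simp
  · have h : (univ.filter fun x : Fin (m' + 1) => (x : ℕ) ≠ 0) = univ.erase 0 := by
      ext x
      simp only [Finset.mem_filter, Finset.mem_univ, true_and, Finset.mem_erase, and_true, ne_eq]
      rw [Fin.ext_iff, Fin.val_zero]
    rw [h, Finset.card_erase_of_mem (Finset.mem_univ _)]
    simp

lemma sum_indicator_const (m : ℕ) (c : ℝ[X]) :
    ∑ x : Fin m, (if (x : ℕ) ≠ 0 then c else 0) = (m - 1 : ℕ) • c := by
  rw [← Finset.sum_filter, Finset.sum_const, card_filter_ne_zero]

lemma cast_sub_one {m : ℕ} (hm : 0 < m) : ((m - 1 : ℕ) : ℝ) = (m : ℝ) - 1 := by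
  push_cast [Nat.cast_sub hm]
  ring

/-- the result of the row and column operations on the char matrix -/
def PP : Matrix (Σ i, Fin (n i)) (Σ i, Fin (n i)) ℝ[X] :=
  Matrix.of fun u w =>
    if (u.2 : ℕ) = 0 then
      (if (w.2 : ℕ) = 0 then
        (if w.1 = u.1 then X - C (2 * (n u.1 : ℝ) - 2) else -C ((n w.1 : ℝ)))
      else (if w.1 = u.1 then -C 2 else -C 1))
    else (if w = u then X + C 2 else 0)

set_option maxHeartbeats 1000000 in
lemma P_eq : (1 - NN n hn) * MM n * (1 + NN n hn) = PP n := by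
  refine Matrix.ext fun u w => ?_
  rw [mul_add, mul_one, Matrix.add_apply, M1N_apply, M1_apply]
  obtain ⟨i, a⟩ := u
  obtain ⟨j, b⟩ := w
  show _ = PP n ⟨i, a⟩ ⟨j, b⟩
  by_cases hu : (a : ℕ) = 0 <;> by_cases hw : (b : ℕ) = 0
  · -- both representatives
    rw [if_pos hu, if_pos hw]
    have hPP : PP n ⟨i, a⟩ ⟨j, b⟩ =
        if j = i then X - C (2 * (n i : ℝ) - 2) else -C ((n j : ℝ)) := by
      simp [PP, hu, hw]
    rw [hPP]
    have hsum : ∀ x : Fin (n j),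
        (if (x : ℕ) ≠ 0 then ((1 - NN n hn) * MM n) ⟨i, a⟩ ⟨j, x⟩ else 0)
          = (if (x : ℕ) ≠ 0 then MM n ⟨i, a⟩ ⟨j, x⟩ else 0) := by
      intro x
      rw [M1_apply, if_pos hu]
    rw [Finset.sum_congr rfl fun x _ => hsum x]
    by_cases hj : j = i
    · subst hj
      have hab : (⟨j, a⟩ : Σ i, Fin (n i)) = ⟨j, b⟩ := (sig_eq n).mpr ⟨rfl, hu.trans hw.symm⟩
      have h1 : MM n ⟨j, a⟩ ⟨j, b⟩ = X := by simp [MM, hab]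
      have h2 : ∀ x : Fin (n j), (if (x : ℕ) ≠ 0 then MM n ⟨j, a⟩ ⟨j, x⟩ else 0)
          = (if (x : ℕ) ≠ 0 then -C 2 else 0) := by
        intro x
        by_cases hx : (x : ℕ) = 0
        · simp [hx]
        · have hne : (⟨j, a⟩ : Σ i, Fin (n i)) ≠ ⟨j, x⟩ := by
            intro hc
            exact hx (((sig_eq n).mp hc).2.symm.trans hu)
          simp [MM, hne, hx]
      rw [h1, Finset.sum_congr rfl fun x _ => h2 x, sum_indicator_const, nsmul_eq_mul,
        ← C_eq_natCast, cast_sub_one (hn j)]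
      rw [if_pos rfl, mul_neg, ← C_mul,
        show ((n j : ℝ) - 1) * 2 = 2 * (n j : ℝ) - 2 by ring]
      ring
    · have hne : (⟨i, a⟩ : Σ i, Fin (n i)) ≠ ⟨j, b⟩ := by
        intro hc
        exact hj (((sig_eq n).mp hc).1.symm)
      have hij : i ≠ j := fun hc => hj hc.symm
      have h1 : MM n ⟨i, a⟩ ⟨j, b⟩ = -C 1 := by simp [MM, hne, hij]
      have h2 : ∀ x : Fin (n j), (if (x : ℕ) ≠ 0 then MM n ⟨i, a⟩ ⟨j, x⟩ else 0)
          = (if (x : ℕ) ≠ 0 then -C 1 else 0) := by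
        intro x
        have hne' : (⟨i, a⟩ : Σ i, Fin (n i)) ≠ ⟨j, x⟩ := by
          intro hc
          exact hij ((sig_eq n).mp hc).1
        simp [MM, hne', hij]
      rw [h1, Finset.sum_congr rfl fun x _ => h2 x, sum_indicator_const, nsmul_eq_mul,
        ← C_eq_natCast, cast_sub_one (hn j), if_neg hj]
      rw [mul_neg, ← C_mul, mul_one]
      simp only [← C_neg, ← C_add]
      congr 1
      ring
  · -- u representative, w not
    rw [if_pos hu, if_neg hw, add_zero]
    have hne : (⟨i, a⟩ : Σ i, Fin (n i)) ≠ ⟨j, b⟩ := by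
      intro hc
      exact hw ((((sig_eq n).mp hc).2.symm).trans hu)
    have hPP : PP n ⟨i, a⟩ ⟨j, b⟩ = if j = i then -C 2 else -C 1 := by
      simp [PP, hu, hw]
    rw [hPP]
    by_cases hj : j = i
    · subst hj
      simp [MM, hne]
    · have hij : i ≠ j := fun hc => hj hc.symm
      simp [MM, hne, hij, hj]
  · -- u not representative, w representative
    rw [if_neg hu, if_pos hw]
    have hne : (⟨j, b⟩ : Σ i, Fin (n i)) ≠ ⟨i, a⟩ := by
      intro hc
      exact hu ((((sig_eq n).mp hc).2.symm).trans hw)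
    have hPP : PP n ⟨i, a⟩ ⟨j, b⟩ = 0 := by
      simp [PP, hu, hne]
    rw [hPP, if_neg hne]
    have hsum : ∀ x : Fin (n j),
        (if (x : ℕ) ≠ 0 then ((1 - NN n hn) * MM n) ⟨i, a⟩ ⟨j, x⟩ else 0)
          = (if (x : ℕ) ≠ 0 then
              (if (⟨j, x⟩ : Σ i, Fin (n i)) = ⟨i, a⟩ then X + C 2
               else if (⟨j, x⟩ : Σ i, Fin (n i)) = rep n hn ⟨i, a⟩ then -(X + C 2) else 0)
            else (0 : ℝ[X])) := by
      intro x
      rw [M1_apply, if_neg hu]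
    rw [Finset.sum_congr rfl fun x _ => hsum x]
    by_cases hj : j = i
    · subst hj
      have hrep : (⟨j, b⟩ : Σ i, Fin (n i)) = rep n hn ⟨j, a⟩ := (sig_eq n).mpr ⟨rfl, hw⟩
      rw [if_pos hrep]
      rw [Finset.sum_eq_single a]
      · have h1 : (⟨j, a⟩ : Σ i, Fin (n i)) = ⟨j, a⟩ := rfl
        rw [if_pos hu, if_pos h1]  -- careful
        ring
      · intro x _ hx
        have h1 : (⟨j, x⟩ : Σ i, Fin (n i)) ≠ ⟨j, a⟩ := by
          intro hc
          exact hx (Fin.ext ((sig_eq n).mp hc).2)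
        by_cases hx0 : (x : ℕ) = 0
        · simp [hx0]
        · have h2 : (⟨j, x⟩ : Σ i, Fin (n i)) ≠ rep n hn ⟨j, a⟩ := by
            intro hc
            exact hx0 ((sig_eq n).mp hc).2
          simp [hx0, h1, h2]
      · intro hc
        exact absurd (Finset.mem_univ _) hc
    · have h0 : ∀ x : Fin (n j),
          (if (x : ℕ) ≠ 0 then
            (if (⟨j, x⟩ : Σ i, Fin (n i)) = ⟨i, a⟩ then X + C 2
             else if (⟨j, x⟩ : Σ i, Fin (n i)) = rep n hn ⟨i, a⟩ then -(X + C 2) else 0)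
          else (0 : ℝ[X])) = 0 := by
        intro x
        have h1 : (⟨j, x⟩ : Σ i, Fin (n i)) ≠ ⟨i, a⟩ := by
          intro hc
          exact hj ((sig_eq n).mp hc).1
        have h2 : (⟨j, x⟩ : Σ i, Fin (n i)) ≠ rep n hn ⟨i, a⟩ := by
          intro hc
          exact hj ((sig_eq n).mp hc).1
        simp [h1, h2]
      rw [Finset.sum_congr rfl fun x _ => h0 x]
      have h3 : (⟨j, b⟩ : Σ i, Fin (n i)) ≠ rep n hn ⟨i, a⟩ := by
        intro hc
        exact hj ((sig_eq n).mp hc).1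
      rw [if_neg h3]
      simp
  · -- both not representatives
    rw [if_neg hu, if_neg hw, add_zero]
    have h3 : (⟨j, b⟩ : Σ i, Fin (n i)) ≠ rep n hn ⟨i, a⟩ := by
      intro hc
      exact hw ((sig_eq n).mp hc).2
    rw [if_neg h3]
    have hPP : PP n ⟨i, a⟩ ⟨j, b⟩ =
        if (⟨j, b⟩ : Σ i, Fin (n i)) = ⟨i, a⟩ then X + C 2 else 0 := by
      simp [PP, hu]
    rw [hPP]

/-- the change-of-index equivalence: non-representatives plus one representative per part -/
def eqv : ({u : Σ i, Fin (n i) // (u.2 : ℕ) ≠ 0} ⊕ Fin k) ≃ (Σ i, Fin (n i)) where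
  toFun := Sum.elim Subtype.val fun i => ⟨i, ⟨0, hn i⟩⟩
  invFun u := if h : (u.2 : ℕ) ≠ 0 then Sum.inl ⟨u, h⟩ else Sum.inr u.1
  left_inv := by
    rintro (⟨u, h⟩ | i)
    · simp [h]
    · simp
  right_inv := by
    intro u
    by_cases h : (u.2 : ℕ) ≠ 0
    · simp [h]
    · simp only [dif_neg h]
      show (⟨u.1, ⟨0, hn u.1⟩⟩ : Σ i, Fin (n i)) = u
      obtain ⟨i, x⟩ := u
      exact (sig_eq n).mpr ⟨rfl, (not_not.mp h).symm⟩

def AA : Matrix (Fin k) (Fin k) ℝ[X] :=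
  Matrix.of fun i j => (if i = j then X - C ((n i : ℝ) - 2) else 0) - C ((n j : ℝ))

def BB : Matrix (Fin k) {u : Σ i, Fin (n i) // (u.2 : ℕ) ≠ 0} ℝ[X] :=
  Matrix.of fun i w => if w.1.1 = i then -C 2 else -C 1

lemma PP_apply (i j : Fin k) (a : Fin (n i)) (b : Fin (n j)) :
    PP n ⟨i, a⟩ ⟨j, b⟩ =
      if (a : ℕ) = 0 then
        (if (b : ℕ) = 0 then
          (if j = i then X - C (2 * (n i : ℝ) - 2) else -C ((n j : ℝ)))
        else (if j = i then -C 2 else -C 1))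
      else (if (⟨j, b⟩ : Σ i, Fin (n i)) = ⟨i, a⟩ then X + C 2 else 0) := rfl

lemma PP_submatrix :
    (PP n).submatrix (eqv n hn) (eqv n hn) =
      Matrix.fromBlocks
        (((X : ℝ[X]) + C 2) • (1 : Matrix {u : Σ i, Fin (n i) // (u.2 : ℕ) ≠ 0}
          {u : Σ i, Fin (n i) // (u.2 : ℕ) ≠ 0} ℝ[X])) 0 (BB n) (AA n) := by
  refine Matrix.ext fun u w => ?_
  rcases u with u | i <;> rcases w with w | j
  · show PP n u.1 w.1 = (((X : ℝ[X]) + C 2) • (1 : Matrix _ _ ℝ[X])) u w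
    rcases eq_or_ne u w with h | h
    · subst h
      simp [PP, u.2]
    · have h' : u.1 ≠ w.1 := fun hc => h (Subtype.ext hc)
      simp [PP, u.2, Matrix.one_apply_ne h, Ne.symm h', h']
  · show PP n u.1 ⟨j, ⟨0, hn j⟩⟩ = 0
    obtain ⟨⟨i, a⟩, ha⟩ := u
    have hne : (⟨j, ⟨0, hn j⟩⟩ : Σ i, Fin (n i)) ≠ ⟨i, a⟩ := by
      intro hc
      exact ha ((sig_eq n).mp hc).2.symm
    simp [PP, ha, hne]
  · show PP n ⟨i, ⟨0, hn i⟩⟩ w.1 = BB n i w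
    obtain ⟨⟨j, b⟩, hb⟩ := w
    have h0 : ((⟨0, hn i⟩ : Fin (n i)) : ℕ) = 0 := rfl
    simp [PP, BB, h0, hb]
  · show PP n ⟨i, ⟨0, hn i⟩⟩ ⟨j, ⟨0, hn j⟩⟩ = AA n i j
    have h0i : ((⟨0, hn i⟩ : Fin (n i)) : ℕ) = 0 := rfl
    have h0j : ((⟨0, hn j⟩ : Fin (n j)) : ℕ) = 0 := rfl
    rcases eq_or_ne i j with h | h
    · subst h
      have l : PP n ⟨i, ⟨0, hn i⟩⟩ ⟨i, ⟨0, hn i⟩⟩ = X - C (2 * (n i : ℝ) - 2) := by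
        rw [PP_apply, if_pos h0i, if_pos h0i, if_pos rfl]
      have r : AA n i i = X - C ((n i : ℝ) - 2) - C ((n i : ℝ)) := by
        show (if i = i then X - C ((n i : ℝ) - 2) else 0) - C ((n i : ℝ)) =
          X - C ((n i : ℝ) - 2) - C ((n i : ℝ))
        rw [if_pos rfl]
      rw [l, r, sub_sub, ← C_add]
      congr 1
      ring
    · have l : PP n ⟨i, ⟨0, hn i⟩⟩ ⟨j, ⟨0, hn j⟩⟩ = -C ((n j : ℝ)) := by
        rw [PP_apply, if_pos h0i, if_pos h0j, if_neg (Ne.symm h)]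
      have r : AA n i j = -C ((n j : ℝ)) := by
        show (if i = j then X - C ((n i : ℝ) - 2) else 0) - C ((n j : ℝ)) = -C ((n j : ℝ))
        rw [if_neg h, zero_sub]
      rw [l, r]

end CMAux
end CMAux

section FinalTheorem
open CMAux

/-- The characteristic polynomial of the distance matrix of `K_{n₁,…,n_k}` equals
`(λ+2)^{n-k} [∏ (λ - nᵢ + 2) - Σ nᵢ ∏_{j≠i} (λ - nⱼ + 2)]`. -/
theorem charpoly_distMatrix_completeMultipartite (k : ℕ) (n : Fin k → ℕ)
    (hn : ∀ i, 0 < n i) :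
    (distMatrixCM n).charpoly =
      (X + C 2) ^ ((∑ i, n i) - k) *
        (∏ i, (X - C ((n i : ℝ) - 2)) -
          ∑ i, C ((n i : ℝ)) * ∏ j ∈ univ.erase i, (X - C ((n j : ℝ) - 2))) := by
  have hchar : (distMatrixCM n).charpoly = (MM n).det := by
    rw [Matrix.charpoly, charmatrix_eq]
  have hdet : (MM n).det = (PP n).det := by
    rw [← P_eq n hn, Matrix.det_mul, Matrix.det_mul]
    have h2 : (1 - NN n hn).det * (1 + NN n hn).det = 1 := by
      rw [← Matrix.det_mul, one_sub_mul_one_add, Matrix.det_one]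
    calc (MM n).det = ((1 - NN n hn).det * (1 + NN n hn).det) * (MM n).det := by
          rw [h2, one_mul]
      _ = (1 - NN n hn).det * (MM n).det * (1 + NN n hn).det := by ring
  have hcard : Fintype.card {u : Σ i, Fin (n i) // (u.2 : ℕ) ≠ 0} + k = ∑ i, n i := by
    have h := Fintype.card_congr (eqv n hn)
    simpa [Fintype.card_sigma] using h
  rw [hchar, hdet, ← Matrix.det_submatrix_equiv_self (eqv n hn) (PP n), PP_submatrix n hn,
    Matrix.det_fromBlocks_zero₁₂, Matrix.det_smul, Matrix.det_one, mul_one]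
  rw [show (AA n).det = ∏ i, (X - C ((n i : ℝ) - 2)) -
      ∑ i, C ((n i : ℝ)) * ∏ j ∈ univ.erase i, (X - C ((n j : ℝ) - 2)) from
    det_diag_sub_row_poly (fun i => (n i : ℝ) - 2) (fun i => (n i : ℝ))]
  congr 2
  omega

end FinalTheorem
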